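/- For a finite abelian group A and prime p, define the signature r_i(A) = log_p [p^{i-1}A : p^iA] for i ≥ 1. If H is a subgroup of A with pA ⊆ H, then r_i(A) ≥ r_i(H) ≥ r_{i+1}(A) for all i ≥ 1. -/

import Mathlib

/-- The subgroup `n • A` of an additive commutative group `A`. -/
def nsmulRange (n : ℕ) (A : Type*) [AddCommGroup A] : AddSubgroup A :=
  (AddMonoidHom.mk' (fun a => n • a) (fun a b => smul_add n a b)).range

/-- The `p^i`-rank `r_i(A) = log_p [p^(i-1)A : p^i A]`. -/
noncomputable def rk (p i : ℕ) (A : Type*) [AddCommGroup A] : ℕ :=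
  Nat.log p ((nsmulRange (p ^ i) A).relIndex (nsmulRange (p ^ (i - 1)) A))

section helpers
variable {G : Type*} [AddCommGroup G]

lemma mem_nsmulRange {n : ℕ} {x : G} : x ∈ nsmulRange n G ↔ ∃ a, n • a = x := Iff.rfl

lemma nsmulRange_le_nsmulRange {m n : ℕ} (h : n ∣ m) : nsmulRange m G ≤ nsmulRange n G := by
  obtain ⟨k, rfl⟩ := h
  rintro x ⟨a, rfl⟩
  refine ⟨k • a, ?_⟩
  show n • (k • a) = (n * k) • a
  rw [← mul_smul]

variable [Finite G]

lemma card_mul_relindex {K L : AddSubgroup G} (h : K ≤ L) :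
    Nat.card K * K.relIndex L = Nat.card L := by
  rw [← AddSubgroup.relIndex_bot_left K, ← AddSubgroup.relIndex_bot_left L]
  exact AddSubgroup.relIndex_mul_relIndex ⊥ K L bot_le h

lemma card_map_eq (f : G →+ G) (L : AddSubgroup G) :
    Nat.card (L.map f) * Nat.card ((f.ker ⊓ L : AddSubgroup G)) = Nat.card L := by
  have h1 := AddSubgroup.relIndex_ker f (K := L)
  have h2 := AddSubgroup.inf_relIndex_right f.ker L
  have h3 := card_mul_relindex (inf_le_right : f.ker ⊓ L ≤ L)
  rw [h2, h1] at h3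
  rw [mul_comm]
  exact h3

lemma surj_card_le (f : G →+ G) {K L : AddSubgroup G} (h : K ≤ L) :
    Nat.card (L.map f) * Nat.card K ≤ Nat.card L * Nat.card (K.map f) := by
  rw [← card_map_eq f L, ← card_map_eq f K]
  have : Nat.card ((f.ker ⊓ K : AddSubgroup G)) ≤ Nat.card ((f.ker ⊓ L : AddSubgroup G)) :=
    AddSubgroup.card_le_of_le (inf_le_inf_left _ h)
  calc Nat.card (L.map f) * (Nat.card (K.map f) * Nat.card ((f.ker ⊓ K : AddSubgroup G)))
      ≤ Nat.card (L.map f) * (Nat.card (K.map f) * Nat.card ((f.ker ⊓ L : AddSubgroup G))) := by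
        exact Nat.mul_le_mul_left _ (Nat.mul_le_mul_left _ this)
    _ = Nat.card (L.map f) * Nat.card ((f.ker ⊓ L : AddSubgroup G)) * Nat.card (K.map f) := by
        ring

/-- relindex of nested subgroups from cards. -/
lemma relindex_of_cards {K L : AddSubgroup G} (h : K ≤ L) {r : ℕ}
    (hr : Nat.card K * r = Nat.card L) : K.relIndex L = r := by
  have h1 := card_mul_relindex h
  have hpos : 0 < Nat.card K := Nat.card_pos
  exact Nat.eq_of_mul_eq_mul_left hpos (h1.trans hr.symm)

end helpers

section main
variable {A : Type*} [AddCommGroup A]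

/-- the multiplication-by-p homomorphism -/
def pHom (p : ℕ) (A : Type*) [AddCommGroup A] : A →+ A :=
  AddMonoidHom.mk' (fun a => p • a) (fun a b => smul_add p a b)

lemma pHom_apply (p : ℕ) (a : A) : pHom p A a = p • a := rfl

lemma map_pHom_nsmulRange (p m : ℕ) :
    (nsmulRange m A).map (pHom p A) = nsmulRange (p * m) A := by
  ext x
  simp only [AddSubgroup.mem_map, mem_nsmulRange]
  constructor
  · rintro ⟨y, ⟨a, rfl⟩, rfl⟩
    exact ⟨a, by rw [pHom_apply, mul_smul]⟩
  · rintro ⟨a, rfl⟩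
    exact ⟨m • a, ⟨a, rfl⟩, by rw [pHom_apply, mul_smul]⟩

lemma mem_mapH {H : AddSubgroup A} {m : ℕ} {x : A} :
    x ∈ (nsmulRange m ↥H).map H.subtype ↔ ∃ h : H, m • (h : A) = x := by
  simp only [AddSubgroup.mem_map, mem_nsmulRange]
  constructor
  · rintro ⟨y, ⟨a, rfl⟩, rfl⟩
    exact ⟨a, by push_cast; rfl⟩
  · rintro ⟨h, rfl⟩
    exact ⟨m • h, ⟨h, rfl⟩, by push_cast; rfl⟩

lemma map_pHom_mapH (H : AddSubgroup A) (p m : ℕ) :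
    ((nsmulRange m ↥H).map H.subtype).map (pHom p A)
      = (nsmulRange (p * m) ↥H).map H.subtype := by
  ext x
  constructor
  · intro hx
    obtain ⟨y, hy, rfl⟩ := AddSubgroup.mem_map.mp hx
    obtain ⟨h, rfl⟩ := mem_mapH.mp hy
    exact mem_mapH.mpr ⟨h, by rw [pHom_apply, mul_smul]⟩
  · intro hx
    obtain ⟨h, rfl⟩ := mem_mapH.mp hx
    exact AddSubgroup.mem_map.mpr ⟨m • (h : A), mem_mapH.mpr ⟨h, rfl⟩,
      by rw [pHom_apply, mul_smul]⟩

lemma card_nsmulRange_H (H : AddSubgroup A) (m : ℕ) :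
    Nat.card (nsmulRange m ↥H) = Nat.card ((nsmulRange m ↥H).map H.subtype) :=
  Nat.card_congr (AddSubgroup.equivMapOfInjective _ _ H.subtype_injective).toEquiv

end main

theorem stmt10 (p : ℕ) (hp : p.Prime) (A : Type*) [AddCommGroup A] [Finite A]
    (hpgrp : ∃ n, Nat.card A = p ^ n)
    (H : AddSubgroup A) (hpA : nsmulRange p A ≤ H) (i : ℕ) (hi : 1 ≤ i) :
    rk p i ↥H ≤ rk p i A ∧ rk p (i + 1) A ≤ rk p i ↥H := by
  obtain ⟨j, rfl⟩ : ∃ j, i = j + 1 := ⟨i - 1, (Nat.succ_pred_eq_of_pos hi).symm⟩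
  set i := j + 1 with hidef
  -- subgroups of A
  set B0 : AddSubgroup A := nsmulRange (p ^ j) A with hB0
  set B1 : AddSubgroup A := nsmulRange (p ^ i) A with hB1
  set B2 : AddSubgroup A := nsmulRange (p ^ (i + 1)) A with hB2
  set C0 : AddSubgroup A := (nsmulRange (p ^ j) ↥H).map H.subtype with hC0
  set C1 : AddSubgroup A := (nsmulRange (p ^ i) ↥H).map H.subtype with hC1
  -- cards
  set a := Nat.card B0
  set b := Nat.card C0
  set c := Nat.card B1
  set d := Nat.card C1
  set e := Nat.card B2
  -- inclusions
  have hCB0 : C0 ≤ B0 := by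
    intro x hx
    obtain ⟨h, rfl⟩ := mem_mapH.mp hx
    exact ⟨(h : A), rfl⟩
  have hCB1 : C1 ≤ B1 := by
    intro x hx
    obtain ⟨h, rfl⟩ := mem_mapH.mp hx
    exact ⟨(h : A), rfl⟩
  have hBC0 : B1 ≤ C0 := by
    rintro x ⟨a, rfl⟩
    refine mem_mapH.mpr ⟨⟨p • a, hpA ⟨a, rfl⟩⟩, ?_⟩
    show p ^ j • (p • a) = p ^ i • a
    rw [← mul_smul, ← pow_succ]
  have hBC1 : B2 ≤ C1 := by
    rintro x ⟨a, rfl⟩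
    refine mem_mapH.mpr ⟨⟨p • a, hpA ⟨a, rfl⟩⟩, ?_⟩
    show p ^ i • (p • a) = p ^ (i + 1) • a
    rw [← mul_smul, ← pow_succ]
  -- maps under pHom
  have hmapB0 : B0.map (pHom p A) = B1 := by
    rw [hB0, map_pHom_nsmulRange, hB1, ← pow_succ']
  have hmapB1 : B1.map (pHom p A) = B2 := by
    rw [hB1, map_pHom_nsmulRange, hB2, ← pow_succ']
  have hmapC0 : C0.map (pHom p A) = C1 := by
    rw [hC0, map_pHom_mapH, hC1, ← pow_succ']
  -- card inequalities from surjection lemma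
  have key1 : c * b ≤ a * d := by
    have := surj_card_le (pHom p A) hCB0
    rwa [hmapB0, hmapC0] at this
  have key2 : d * c ≤ b * e := by
    have := surj_card_le (pHom p A) hBC0
    rwa [hmapB1, hmapC0] at this
  -- relindex values
  have hrA : B1.relIndex B0 = c * (B1.relIndex B0) / c := by
    rw [Nat.mul_div_cancel_left _ (Nat.card_pos (α := B1))]
  have erA : c * (B1.relIndex B0) = a := card_mul_relindex (le_trans hBC0 hCB0)
  have erA2 : e * (B2.relIndex B1) = c := card_mul_relindex (le_trans hBC1 hCB1)
  have erH : d * ((nsmulRange (p ^ i) ↥H).relIndex (nsmulRange (p ^ (i - 1)) ↥H)) = b := by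
    have hle : nsmulRange (p ^ i) ↥H ≤ nsmulRange (p ^ j) ↥H :=
      nsmulRange_le_nsmulRange (pow_dvd_pow p (Nat.le_succ j))
    have h1 : Nat.card (nsmulRange (p ^ i) ↥H) *
        ((nsmulRange (p ^ i) ↥H).relIndex (nsmulRange (p ^ j) ↥H))
        = Nat.card (nsmulRange (p ^ j) ↥H) := card_mul_relindex hle
    have hd : Nat.card (nsmulRange (p ^ i) ↥H) = d := card_nsmulRange_H H (p ^ i)
    have hb : Nat.card (nsmulRange (p ^ j) ↥H) = b := card_nsmulRange_H H (p ^ j)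
    have hj : i - 1 = j := rfl
    rw [hj, ← hd, ← hb]
    exact h1
  -- positivity
  have hcpos : 0 < c := Nat.card_pos
  have hdpos : 0 < d := Nat.card_pos
  have hepos : 0 < e := Nat.card_pos
  set rA := B1.relIndex B0
  set rA2 := B2.relIndex B1
  set rH := (nsmulRange (p ^ i) ↥H).relIndex (nsmulRange (p ^ (i - 1)) ↥H)
  have ineq1 : rH ≤ rA := by
    have : (c * d) * rH ≤ (c * d) * rA := by
      calc (c * d) * rH = c * (d * rH) := by ring
        _ = c * b := by rw [erH]
        _ ≤ a * d := key1
        _ = (c * rA) * d := by rw [erA]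
        _ = (c * d) * rA := by ring
    exact Nat.le_of_mul_le_mul_left this (Nat.mul_pos hcpos hdpos)
  have ineq2 : rA2 ≤ rH := by
    have : (e * d) * rA2 ≤ (e * d) * rH := by
      calc (e * d) * rA2 = (e * rA2) * d := by ring
        _ = c * d := by rw [erA2]
        _ ≤ d * c := by rw [Nat.mul_comm]
        _ ≤ b * e := key2
        _ = (d * rH) * e := by rw [erH]
        _ = (e * d) * rH := by ring
    exact Nat.le_of_mul_le_mul_left this (Nat.mul_pos hepos hdpos)
  constructor
  · exact Nat.log_mono_right ineq1
  · have hrk : rk p (i + 1) A = Nat.log p rA2 := by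
      unfold rk
      congr 1
    have hrkH : rk p i ↥H = Nat.log p rH := rfl
    rw [hrk, hrkH]
    exact Nat.log_mono_right ineq2
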